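/- arXiv:2209.12040 — 2 statements merged into one kernel-verified Lean document; each statement's English description precedes it below -/
import Mathlib

section
/- Let (μ̂, λ̂, x̂) be given with μ̂, λ̂ ∈ ℝ, μ̂ ≠ 0, ‖x̂‖ = 1, and define γ_C = x̂ᴴCx̂ and r = (A − μ̂C − λ̂I)x̂. Then there exist Hermitian matrices δA and δC satisfying δAx̂ − μ̂ δC x̂ = −r and x̂ᴴδCx̂ = −γ_C, with ‖δA‖ ≤ √2 η₁ ‖A‖ and ‖δC‖ ≤ √2 η₁ ‖C‖, where η₁ = max{|x̂ᴴAx̂ − λ̂|/‖A‖, |γ_C|/‖C‖, ‖r‖/(‖A‖ + |μ̂|‖C‖)}. -/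
open scoped Matrix

/-- Spectral (ℓ²-operator) norm of a square complex matrix. -/
noncomputable def specNorm {n : Type*} [Fintype n] [DecidableEq n]
    (M : Matrix n n ℂ) : ℝ :=
  ‖Matrix.toEuclideanCLM (𝕜 := ℂ) M‖

/-- Euclidean norm of a complex vector. -/
noncomputable def vecNorm {n : Type*} [Fintype n] (x : n → ℂ) : ℝ :=
  ‖(EuclideanSpace.equiv n ℂ).symm x‖

/-- A Hermitian matrix is indefinite: its quadratic form takes both
positive and negative values. -/
def IsIndefinite {n : Type*} [Fintype n] (M : Matrix n n ℂ) : Prop :=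
  (∃ y : n → ℂ, 0 < (star y ⬝ᵥ M.mulVec y).re) ∧
  (∃ z : n → ℂ, (star z ⬝ᵥ M.mulVec z).re < 0)

/-- `(μ, lam, x)` is a 2D-eigentriplet of the pair `(A, C)`:
`(A - μ C) x = lam x`, `xᴴ C x = 0`, `xᴴ x = 1`. -/
def Is2DEigentriplet {n : Type*} [Fintype n] (A C : Matrix n n ℂ)
    (μ lam : ℝ) (x : n → ℂ) : Prop :=
  (A - (μ : ℂ) • C).mulVec x = (lam : ℂ) • x ∧
  star x ⬝ᵥ C.mulVec x = 0 ∧ star x ⬝ᵥ x = 1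

section Helpers
set_option linter.unusedSectionVars false
set_option maxHeartbeats 1000000
open Matrix

variable {n : Type*} [Fintype n] [DecidableEq n]

lemma vecNorm_eq (y : n → ℂ) : vecNorm y = ‖(WithLp.equiv 2 (n → ℂ)).symm y‖ := rfl

lemma vecNorm_nonneg (y : n → ℂ) : 0 ≤ vecNorm y := norm_nonneg _

lemma inner_symm (u v : n → ℂ) :
    (inner ℂ ((EuclideanSpace.equiv n ℂ).symm u) ((EuclideanSpace.equiv n ℂ).symm v) : ℂ)
      = star u ⬝ᵥ v := by simp [PiLp.inner_apply, dotProduct, mul_comm]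

lemma vecMulVec_mulVec' (u v y : n → ℂ) :
    (vecMulVec u v).mulVec y = (v ⬝ᵥ y) • u := by
  ext i
  simp [mulVec, vecMulVec_apply, dotProduct, Finset.mul_sum, mul_assoc, mul_comm, mul_left_comm]

lemma conjTranspose_vecMulVec (u v : n → ℂ) :
    (vecMulVec u (star v))ᴴ = vecMulVec v (star u) := by
  ext i j
  simp [vecMulVec_apply, conjTranspose_apply, mul_comm]

lemma specNorm_le_of_bound (M : Matrix n n ℂ) (K : ℝ) (hK : 0 ≤ K)
    (h : ∀ y : n → ℂ, vecNorm (M.mulVec y) ≤ K * vecNorm y) :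
    specNorm M ≤ K := by
  refine ContinuousLinearMap.opNorm_le_bound _ hK fun Y => ?_
  have h1 : toEuclideanCLM (𝕜 := ℂ) M Y
      = (WithLp.equiv 2 (n → ℂ)).symm (M.mulVec (WithLp.equiv 2 (n → ℂ) Y)) := by
    conv_lhs => rw [show Y = (WithLp.equiv 2 (n → ℂ)).symm (WithLp.equiv 2 (n → ℂ) Y) from
      (Equiv.symm_apply_apply _ _).symm]
    rfl
  rw [h1]
  exact h (WithLp.equiv 2 (n → ℂ) Y)

lemma herm_construct (x w : n → ℂ) (a : ℝ)
    (hx : star x ⬝ᵥ x = 1) (hxw : star x ⬝ᵥ w = 0) :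
    ∃ δ : Matrix n n ℂ, δ.IsHermitian ∧
      δ.mulVec x = (a : ℂ) • x + w ∧
      specNorm δ ≤ Real.sqrt (a ^ 2 + vecNorm w ^ 2) := by
  set b : ℝ := vecNorm w with hb
  have hb0 : 0 ≤ b := vecNorm_nonneg w
  have hwx : star w ⬝ᵥ x = 0 := by
    rw [star_dotProduct, hxw, star_zero]
  set δ : Matrix n n ℂ :=
    (a : ℂ) • vecMulVec x (star x) + vecMulVec w (star x) + vecMulVec x (star w)
      - ((a / b ^ 2 : ℝ) : ℂ) • vecMulVec w (star w) with hδ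
  have hherm : δ.IsHermitian := by
    show δᴴ = δ
    rw [hδ]
    simp only [conjTranspose_sub, conjTranspose_add, conjTranspose_smul,
      _root_.conjTranspose_vecMulVec, Complex.star_def, Complex.conj_ofReal]
    abel
  have hmul : ∀ y : n → ℂ, δ.mulVec y = ((a:ℂ) * (star x ⬝ᵥ y) + (star w ⬝ᵥ y)) • x
      + ((star x ⬝ᵥ y) - ((a / b^2 : ℝ):ℂ) * (star w ⬝ᵥ y)) • w := by
    intro y
    rw [hδ]
    simp only [sub_mulVec, add_mulVec, smul_mulVec, vecMulVec_mulVec']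
    module
  have hmulx : δ.mulVec x = (a : ℂ) • x + w := by
    rw [hmul x, hx, hwx]
    simp
  refine ⟨δ, hherm, hmulx, ?_⟩
  apply specNorm_le_of_bound _ _ (Real.sqrt_nonneg _)
  intro y
  set E := (EuclideanSpace.equiv n ℂ).symm with hE
  set p : ℂ := star x ⬝ᵥ y with hp
  set q : ℂ := star w ⬝ᵥ y with hq
  set c₁ : ℂ := (a:ℂ) * p + q with hc₁
  set c₂ : ℂ := p - ((a / b^2 : ℝ):ℂ) * q with hc₂
  have hXn : ‖E x‖ = 1 := by
    have h1 : (inner ℂ (E x) (E x) : ℂ) = ((‖E x‖ : ℂ)) ^ 2 := inner_self_eq_norm_sq_to_K _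
    rw [inner_symm, hx] at h1
    have h2 : (‖E x‖ : ℝ) ^ 2 = 1 := by
      have := h1.symm
      push_cast at this
      exact_mod_cast this
    nlinarith [norm_nonneg (E x)]
  have hWn : ‖E w‖ = b := rfl
  have hXW : (inner ℂ (E x) (E w) : ℂ) = 0 := by rw [inner_symm, hxw]
  have hpI : (inner ℂ (E x) (E y) : ℂ) = p := by rw [inner_symm, hp]
  have hqI : (inner ℂ (E w) (E y) : ℂ) = q := by rw [inner_symm, hq]
  have hval : vecNorm (δ.mulVec y) = ‖c₁ • E x + c₂ • E w‖ := by
    rw [hmul y]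
    show ‖E (c₁ • x + c₂ • w)‖ = _
    rw [map_add, _root_.map_smul, _root_.map_smul]
  have hYn : vecNorm y = ‖E y‖ := rfl
  rw [hval, hYn]
  have hsq : ‖c₁ • E x + c₂ • E w‖ ^ 2 = ‖c₁‖^2 + ‖c₂‖^2 * b^2 := by
    rw [@norm_add_sq ℂ, inner_smul_left, inner_smul_right, hXW]
    simp [norm_smul, hXn, hWn]
    ring
  have habs : ∀ z : ℂ, ‖z‖^2 = Complex.normSq z := fun z => by
    rw [Complex.sq_norm]
  have key : ‖c₁‖^2 + ‖c₂‖^2 * b^2 ≤ (a^2 + b^2) * ‖E y‖^2 := by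
    rcases eq_or_lt_of_le hb0 with hb0' | hbpos
    · -- b = 0, w = 0
      have hw0 : E w = 0 := by
        rw [← norm_eq_zero, hWn, ← hb0']
      have hq0 : q = 0 := by rw [← hqI, hw0, inner_zero_left]
      have h1 : ‖c₁‖^2 = a^2 * ‖p‖^2 := by
        rw [hc₁, hq0, add_zero, norm_mul, Complex.norm_real, Real.norm_eq_abs, mul_pow, sq_abs]
      have hple : ‖p‖ ≤ ‖E y‖ := by
        rw [← hpI]
        calc ‖(inner ℂ (E x) (E y) : ℂ)‖ ≤ ‖E x‖ * ‖E y‖ := norm_inner_le_norm _ _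
        _ = ‖E y‖ := by rw [hXn, one_mul]
      have h2 : ‖p‖^2 ≤ ‖E y‖^2 := by nlinarith [norm_nonneg p]
      rw [← hb0', h1]
      nlinarith [sq_nonneg a]
    · -- b > 0 : Bessel
      have hbn : b ≠ 0 := ne_of_gt hbpos
      set v : Fin 2 → EuclideanSpace ℂ n := ![E x, ((b⁻¹ : ℝ) : ℂ) • E w] with hv
      have hv0 : v 0 = E x := rfl
      have hv1 : v 1 = ((b⁻¹ : ℝ) : ℂ) • E w := rfl
      have hortho : Orthonormal ℂ v := by
        constructor
        · intro i
          fin_cases i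
          · show ‖v 0‖ = 1
            rw [hv0, hXn]
          · show ‖v 1‖ = 1
            rw [hv1, norm_smul, hWn, Complex.norm_real, Real.norm_eq_abs,
              abs_of_pos (inv_pos.mpr hbpos)]
            field_simp
        · intro i j hij
          fin_cases i <;> fin_cases j
          · exact absurd rfl hij
          · show (inner ℂ (v 0) (v 1) : ℂ) = 0
            rw [hv0, hv1, inner_smul_right, hXW, mul_zero]
          · show (inner ℂ (v 1) (v 0) : ℂ) = 0
            rw [hv0, hv1, inner_smul_left, ← inner_conj_symm, hXW, map_zero, mul_zero]
          · exact absurd rfl hij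
      have hbessel := hortho.sum_inner_products_le (E y) (s := Finset.univ)
      rw [Fin.sum_univ_two, hv0, hv1] at hbessel
      rw [inner_smul_left, hpI, hqI] at hbessel
      have hnc : ‖(starRingEnd ℂ) ((b⁻¹ : ℝ) : ℂ) * q‖ = b⁻¹ * ‖q‖ := by
        rw [norm_mul, Complex.conj_ofReal, Complex.norm_real, Real.norm_eq_abs,
          abs_of_pos (inv_pos.mpr hbpos)]
      rw [hnc] at hbessel
      have hbessel' : Complex.normSq p + b⁻¹^2 * Complex.normSq q ≤ ‖E y‖^2 := by
        rw [← habs, ← habs]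
        nlinarith [hbessel]
      have e1 : Complex.normSq c₁
          = a^2 * Complex.normSq p + 2*a*(p * (starRingEnd ℂ) q).re + Complex.normSq q := by
        rw [hc₁, Complex.normSq_add, Complex.normSq_mul, Complex.normSq_ofReal]
        rw [show ((a:ℂ) * p) * (starRingEnd ℂ) q = (a:ℂ) * (p * (starRingEnd ℂ) q) by ring,
          Complex.re_ofReal_mul]
        ring
      have e2 : Complex.normSq c₂
          = Complex.normSq p - 2*(a/b^2)*(p * (starRingEnd ℂ) q).re
            + (a/b^2)^2 * Complex.normSq q := by
        rw [hc₂, Complex.normSq_sub, Complex.normSq_mul, Complex.normSq_ofReal]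
        rw [show (starRingEnd ℂ) (((a/b^2:ℝ):ℂ) * q) = ((a/b^2:ℝ):ℂ) * (starRingEnd ℂ) q by
          rw [_root_.map_mul, Complex.conj_ofReal]]
        rw [show p * (((a/b^2:ℝ):ℂ) * (starRingEnd ℂ) q)
            = ((a/b^2:ℝ):ℂ) * (p * (starRingEnd ℂ) q) by ring, Complex.re_ofReal_mul]
        ring
      have expand : Complex.normSq c₁ + Complex.normSq c₂ * b^2
          = (a^2+b^2) * (Complex.normSq p + b⁻¹^2 * Complex.normSq q) := by
        rw [e1, e2]; field_simp; ring
      rw [habs, habs, expand]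
      exact mul_le_mul_of_nonneg_left hbessel' (by positivity)
  calc ‖c₁ • E x + c₂ • E w‖ = Real.sqrt (‖c₁ • E x + c₂ • E w‖^2) := (Real.sqrt_sq (norm_nonneg _)).symm
  _ ≤ Real.sqrt ((a^2 + b^2) * ‖E y‖^2) := Real.sqrt_le_sqrt (by rw [hsq]; exact key)
  _ = Real.sqrt (a^2 + b^2) * ‖E y‖ := by
      rw [Real.sqrt_mul (by positivity), Real.sqrt_sq (norm_nonneg _)]

lemma vecNorm_smul (c : ℂ) (v : n → ℂ) : vecNorm (c • v) = ‖c‖ * vecNorm v := by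
  unfold vecNorm
  rw [_root_.map_smul, norm_smul]

lemma vecNorm_perp_le (x r : n → ℂ) (hx : star x ⬝ᵥ x = 1) :
    vecNorm (r - (star x ⬝ᵥ r) • x) ≤ vecNorm r := by
  set E := (EuclideanSpace.equiv n ℂ).symm with hE
  set p : ℂ := star x ⬝ᵥ r with hp
  have hER : E r = E (r - p • x) + p • E x := by
    rw [map_sub, _root_.map_smul]; abel
  have hXX : (inner ℂ (E x) (E x) : ℂ) = 1 := by rw [inner_symm, hx]
  have hXR : (inner ℂ (E x) (E r) : ℂ) = p := by rw [inner_symm]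
  have hperp : (inner ℂ (E (r - p • x)) (p • E x) : ℂ) = 0 := by
    rw [inner_smul_right, map_sub, _root_.map_smul, inner_sub_left,
      inner_smul_left]
    rw [← hE] at *
    rw [show (inner ℂ (E r) (E x) : ℂ) = starRingEnd ℂ p by
      rw [← inner_conj_symm, hXR], hXX]
    ring
  have hsq : vecNorm r ^ 2 = vecNorm (r - p • x) ^ 2 + ‖p • E x‖ ^ 2 := by
    unfold vecNorm
    rw [← hE, hER, @norm_add_sq ℂ, hperp]
    simp
  have h1 : vecNorm (r - p • x) ^ 2 ≤ vecNorm r ^ 2 := by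
    rw [hsq]; linarith [sq_nonneg ‖p • E x‖]
  nlinarith [vecNorm_nonneg (r - p • x), vecNorm_nonneg r]

lemma herm_dot_conj (A : Matrix n n ℂ) (hA : A.IsHermitian) (x : n → ℂ) :
    (starRingEnd ℂ) (star x ⬝ᵥ A.mulVec x) = star x ⬝ᵥ A.mulVec x := by
  calc (starRingEnd ℂ) (star x ⬝ᵥ A.mulVec x) = star (star x ⬝ᵥ A.mulVec x) := rfl
  _ = star (A.mulVec x) ⬝ᵥ x := (star_dotProduct _ _).symm
  _ = (star x ᵥ* Aᴴ) ⬝ᵥ x := by rw [star_mulVec]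
  _ = (star x ᵥ* A) ⬝ᵥ x := by rw [hA.eq]
  _ = star x ⬝ᵥ A.mulVec x := (dotProduct_mulVec _ _ _).symm

lemma herm_dot_real (A : Matrix n n ℂ) (hA : A.IsHermitian) (x : n → ℂ) :
    star x ⬝ᵥ A.mulVec x = (((star x ⬝ᵥ A.mulVec x).re : ℝ) : ℂ) :=
  (Complex.conj_eq_iff_re.mp (herm_dot_conj A hA x)).symm

lemma specNorm_pos (A : Matrix n n ℂ) (hA0 : A ≠ 0) : 0 < specNorm A := by
  unfold specNorm
  rw [norm_pos_iff]
  intro h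
  apply hA0
  have hinj : Function.Injective (Matrix.toEuclideanCLM (𝕜 := ℂ) (n := n)) :=
    (Matrix.toEuclideanCLM (𝕜 := ℂ) (n := n)).toEquiv.injective
  apply hinj
  rw [h, map_zero]

end Helpers

open Matrix
set_option maxHeartbeats 1000000

/-- construction of Hermitian perturbations `δA, δC`
satisfying `δA x̂ - μ̂ δC x̂ = -r`, `x̂ᴴ δC x̂ = -γ_C`, with norm bounds
`‖δA‖ ≤ √2 η₁ ‖A‖` and `‖δC‖ ≤ √2 η₁ ‖C‖`. -/

theorem stmt2 {n : Type*} [Fintype n] [DecidableEq n]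
    (A C : Matrix n n ℂ) (hA : A.IsHermitian) (hC : C.IsHermitian)
    (hA0 : A ≠ 0) (hC0 : C ≠ 0)
    (μ lam : ℝ) (hμ : μ ≠ 0) (x : n → ℂ) (hx : star x ⬝ᵥ x = 1)
    (r : n → ℂ) (hr : r = (A - (μ : ℂ) • C - (lam : ℂ) • 1).mulVec x)
    (η₁ : ℝ)
    (hη₁ : η₁ = max (max
        (‖star x ⬝ᵥ A.mulVec x - (lam : ℂ)‖ / specNorm A)
        (‖star x ⬝ᵥ C.mulVec x‖ / specNorm C))
      (vecNorm r / (specNorm A + |μ| * specNorm C))) :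
    ∃ δA δC : Matrix n n ℂ, δA.IsHermitian ∧ δC.IsHermitian ∧
      δA.mulVec x - (μ : ℂ) • δC.mulVec x = -r ∧
      star x ⬝ᵥ δC.mulVec x = -(star x ⬝ᵥ C.mulVec x) ∧
      specNorm δA ≤ Real.sqrt 2 * η₁ * specNorm A ∧
      specNorm δC ≤ Real.sqrt 2 * η₁ * specNorm C := by
  have hSA : 0 < specNorm A := specNorm_pos A hA0
  have hSC : 0 < specNorm C := specNorm_pos C hC0
  set D : ℝ := specNorm A + |μ| * specNorm C with hD
  have hDpos : 0 < D := by positivity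
  set α : ℝ := (star x ⬝ᵥ A.mulVec x).re - lam with hα
  set γ : ℝ := (star x ⬝ᵥ C.mulVec x).re with hγ
  have hAx : star x ⬝ᵥ A.mulVec x = ((α + lam : ℝ) : ℂ) := by
    rw [herm_dot_real A hA x]; push_cast; rw [hα]; push_cast; ring
  have hCx : star x ⬝ᵥ C.mulVec x = ((γ : ℝ) : ℂ) := herm_dot_real C hC x
  -- x^H r
  have hpr : star x ⬝ᵥ r = ((α - μ * γ : ℝ) : ℂ) := by
    rw [hr, sub_mulVec, sub_mulVec, smul_mulVec, smul_mulVec, one_mulVec,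
      dotProduct_sub, dotProduct_sub, dotProduct_smul, dotProduct_smul, hAx, hCx, hx]
    simp only [smul_eq_mul]; push_cast; ring
  set rp : n → ℂ := r - ((α - μ * γ : ℝ) : ℂ) • x with hrp
  have hxrp : star x ⬝ᵥ rp = 0 := by
    rw [hrp, dotProduct_sub, dotProduct_smul, hx, hpr, smul_eq_mul, mul_one, sub_self]
  have hrdec : r = rp + ((α - μ * γ : ℝ) : ℂ) • x := by rw [hrp]; abel
  have hrple : vecNorm rp ≤ vecNorm r := by
    have := vecNorm_perp_le x r hx
    rwa [hpr] at this
  -- η₁ inequalities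
  have e3 : vecNorm r / D ≤ η₁ := hη₁ ▸ le_max_right _ _
  have hη₀ : 0 ≤ η₁ := le_trans (div_nonneg (vecNorm_nonneg r) hDpos.le) e3
  have e1 : |α| ≤ η₁ * specNorm A := by
    have h1 : ‖star x ⬝ᵥ A.mulVec x - (lam : ℂ)‖ = |α| := by
      rw [hAx, show (((α + lam : ℝ) : ℂ) - (lam : ℂ)) = ((α : ℝ) : ℂ) by push_cast; ring,
        Complex.norm_real, Real.norm_eq_abs]
    have h2 : |α| / specNorm A ≤ η₁ := by
      rw [← h1]; exact hη₁ ▸ le_trans (le_max_left _ _) (le_max_left _ _)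
    calc |α| = |α| / specNorm A * specNorm A := by field_simp
    _ ≤ η₁ * specNorm A := mul_le_mul_of_nonneg_right h2 hSA.le
  have e2 : |γ| ≤ η₁ * specNorm C := by
    have h1 : ‖star x ⬝ᵥ C.mulVec x‖ = |γ| := by
      rw [hCx, Complex.norm_real, Real.norm_eq_abs]
    have h2 : |γ| / specNorm C ≤ η₁ := by
      rw [← h1]; exact hη₁ ▸ le_trans (le_max_right _ _) (le_max_left _ _)
    calc |γ| = |γ| / specNorm C * specNorm C := by field_simp
    _ ≤ η₁ * specNorm C := mul_le_mul_of_nonneg_right h2 hSC.le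
  -- splitting coefficients
  set t : ℝ := specNorm A / D with ht
  set s : ℝ := |μ| * specNorm C / D with hs
  have hts : t + s = 1 := by rw [ht, hs]; field_simp; rw [hD]
  have ht0 : 0 ≤ t := by positivity
  have hs0 : 0 ≤ s := by positivity
  -- constructions
  set wA : n → ℂ := ((-t : ℝ) : ℂ) • rp with hwA
  set wC : n → ℂ := ((s / μ : ℝ) : ℂ) • rp with hwC
  have hxwA : star x ⬝ᵥ wA = 0 := by
    rw [hwA, dotProduct_smul, hxrp, smul_zero]
  have hxwC : star x ⬝ᵥ wC = 0 := by
    rw [hwC, dotProduct_smul, hxrp, smul_zero]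
  obtain ⟨δA, hδAh, hδAx, hδAn⟩ := herm_construct x wA (-α) hx hxwA
  obtain ⟨δC, hδCh, hδCx, hδCn⟩ := herm_construct x wC (-γ) hx hxwC
  refine ⟨δA, δC, hδAh, hδCh, ?_, ?_, ?_, ?_⟩
  · -- δA x - μ δC x = -r
    rw [hδAx, hδCx, hwA, hwC]
    rw [show -r = -rp - ((α - μ * γ : ℝ) : ℂ) • x by rw [hrdec]; abel]
    have hμc : (μ : ℂ) ≠ 0 := by exact_mod_cast hμ
    have htsC : (t : ℂ) + (s : ℂ) = 1 := by exact_mod_cast hts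
    clear_value α γ t s rp
    match_scalars
    · push_cast; ring
    · push_cast
      field_simp
      linear_combination -htsC
  · -- x^H δC x = -γ_C
    rw [hδCx, dotProduct_add, dotProduct_smul, hx, hxwC, hCx]
    simp only [smul_eq_mul]; push_cast; ring
  · -- bound for δA
    have hnwA : vecNorm wA ≤ η₁ * specNorm A := by
      rw [hwA, vecNorm_smul, Complex.norm_real, Real.norm_eq_abs, abs_neg, abs_of_nonneg ht0]
      calc t * vecNorm rp ≤ t * vecNorm r :=
        mul_le_mul_of_nonneg_left hrple ht0
      _ = specNorm A * (vecNorm r / D) := by rw [ht]; field_simp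
      _ ≤ specNorm A * η₁ := mul_le_mul_of_nonneg_left e3 hSA.le
      _ = η₁ * specNorm A := mul_comm _ _
    refine le_trans hδAn ?_
    have hb : (-α)^2 + vecNorm wA ^ 2 ≤ 2 * (η₁ * specNorm A)^2 := by
      nlinarith [vecNorm_nonneg wA, abs_nonneg α, sq_abs α]
    calc Real.sqrt ((-α)^2 + vecNorm wA ^ 2) ≤ Real.sqrt (2 * (η₁ * specNorm A)^2) :=
      Real.sqrt_le_sqrt hb
    _ = Real.sqrt 2 * (η₁ * specNorm A) := by
        rw [Real.sqrt_mul (by norm_num), Real.sqrt_sq (by positivity)]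
    _ = Real.sqrt 2 * η₁ * specNorm A := by ring
  · -- bound for δC
    have hnwC : vecNorm wC ≤ η₁ * specNorm C := by
      rw [hwC, vecNorm_smul, Complex.norm_real, Real.norm_eq_abs, abs_div, abs_of_nonneg hs0]
      have hsμ : s / |μ| = specNorm C / D := by
        rw [hs]; field_simp
      rw [hsμ]
      calc specNorm C / D * vecNorm rp ≤ specNorm C / D * vecNorm r :=
        mul_le_mul_of_nonneg_left hrple (by positivity)
      _ = specNorm C * (vecNorm r / D) := by field_simp
      _ ≤ specNorm C * η₁ := mul_le_mul_of_nonneg_left e3 hSC.le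
      _ = η₁ * specNorm C := mul_comm _ _
    refine le_trans hδCn ?_
    have hb : (-γ)^2 + vecNorm wC ^ 2 ≤ 2 * (η₁ * specNorm C)^2 := by
      nlinarith [vecNorm_nonneg wC, abs_nonneg γ, sq_abs γ]
    calc Real.sqrt ((-γ)^2 + vecNorm wC ^ 2) ≤ Real.sqrt (2 * (η₁ * specNorm C)^2) :=
      Real.sqrt_le_sqrt hb
    _ = Real.sqrt 2 * (η₁ * specNorm C) := by
        rw [Real.sqrt_mul (by norm_num), Real.sqrt_sq (by positivity)]
    _ = Real.sqrt 2 * η₁ * specNorm C := by ring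
end

section
/- Let Â be a stable matrix with distance to instability β(Â), and let F be a matrix with β̂ ≡ β(Â) − ‖F‖ > 0 such that Â + F + (E_β − F) is unstable where E_β attains ‖E_β‖ = β(Â) and Â + E_β is unstable, and F = ((β(Â) − β̂)/β(Â)) E_β. Then β(Â + F) = β̂. -/
open scoped Matrix

/-- A matrix is unstable if it has an eigenvalue with nonnegative real part. -/
def Unstable {m : Type*} [Fintype m] [DecidableEq m]
    (M : Matrix m m ℂ) : Prop :=
  ∃ z ∈ spectrum ℂ M, 0 ≤ z.re

/-- The distance to instability in the spectral norm. -/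
noncomputable def dti {m : Type*} [Fintype m] [DecidableEq m]
    (M : Matrix m m ℂ) : ℝ :=
  sInf {t : ℝ | ∃ E : Matrix m m ℂ, specNorm E = t ∧ Unstable (M + E)}


lemma specNorm_nonneg {n : Type*} [Fintype n] [DecidableEq n]
    (M : Matrix n n ℂ) : 0 ≤ specNorm M := norm_nonneg _

set_option synthInstance.maxHeartbeats 1000000 in
lemma specNorm_smul {n : Type*} [Fintype n] [DecidableEq n]
    (c : ℂ) (M : Matrix n n ℂ) : specNorm (c • M) = ‖c‖ * specNorm M := by
  unfold specNorm
  rw [map_smul]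
  exact norm_smul c (Matrix.toEuclideanCLM (𝕜 := ℂ) M)

set_option synthInstance.maxHeartbeats 1000000 in
lemma specNorm_add_le {n : Type*} [Fintype n] [DecidableEq n]
    (M N : Matrix n n ℂ) : specNorm (M + N) ≤ specNorm M + specNorm N := by
  unfold specNorm
  rw [map_add]
  exact norm_add_le _ _

/-- with `E_β` attaining `‖E_β‖ = β(Â)` and `Â + E_β` unstable,
and `F = ((β(Â) − β̂)/β(Â)) E_β` for `0 < β̂ < β(Â)`, one has
`β(Â + F) = β̂`. -/
theorem stmt9 {m : Type*} [Fintype m] [DecidableEq m]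
    (Ah Eβ : Matrix m m ℂ) (hstab : ¬ Unstable Ah)
    (hE : specNorm Eβ = dti Ah) (hEun : Unstable (Ah + Eβ))
    (βh : ℝ) (hβpos : 0 < βh) (hβ : βh < dti Ah)
    (F : Matrix m m ℂ)
    (hF : F = (((dti Ah - βh) / dti Ah : ℝ) : ℂ) • Eβ) :
    dti (Ah + F) = βh := by
  have hβ0 : 0 < dti Ah := hβpos.trans hβ
  have hβne : dti Ah ≠ 0 := ne_of_gt hβ0
  -- norm of F
  have hFn : specNorm F = dti Ah - βh := by
    rw [hF, specNorm_smul, hE]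
    rw [Complex.norm_real, Real.norm_eq_abs, abs_of_nonneg (div_nonneg (by linarith) hβ0.le),
      div_mul_cancel₀ _ hβne]
  -- E_β - F
  have hEF : Eβ - F = ((βh / dti Ah : ℝ) : ℂ) • Eβ := by
    have hc : ((βh / dti Ah : ℝ) : ℂ) = 1 - (((dti Ah - βh) / dti Ah : ℝ) : ℂ) := by
      have hβne' : (dti Ah : ℂ) ≠ 0 := by exact_mod_cast hβne
      push_cast
      field_simp
      ring
    rw [hF, hc, sub_smul, one_smul]
  have hEFn : specNorm (Eβ - F) = βh := by
    rw [hEF, specNorm_smul, hE]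
    rw [Complex.norm_real, Real.norm_eq_abs, abs_of_nonneg (div_nonneg hβpos.le hβ0.le),
      div_mul_cancel₀ _ hβne]
  have hmem : βh ∈ {t : ℝ | ∃ E : Matrix m m ℂ, specNorm E = t ∧ Unstable (Ah + F + E)} := by
    refine ⟨Eβ - F, hEFn, ?_⟩
    have h : Ah + F + (Eβ - F) = Ah + Eβ := by abel
    rwa [h]
  have hbdd : BddBelow {t : ℝ | ∃ E : Matrix m m ℂ, specNorm E = t ∧ Unstable (Ah + F + E)} :=
    ⟨0, fun t ht => by obtain ⟨E, hE', _⟩ := ht; exact hE' ▸ specNorm_nonneg E⟩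
  refine le_antisymm (csInf_le hbdd hmem) (le_csInf ⟨βh, hmem⟩ ?_)
  rintro t ⟨E, hEt, hun⟩
  have h1 : dti Ah ≤ specNorm (F + E) := by
    apply csInf_le
    · exact ⟨0, fun t ht => by obtain ⟨E', hE', _⟩ := ht; exact hE' ▸ specNorm_nonneg E'⟩
    · exact ⟨F + E, rfl, by rwa [← add_assoc]⟩
  have h2 : specNorm (F + E) ≤ specNorm F + specNorm E := specNorm_add_le _ _
  rw [hFn, hEt] at h2
  linarith
end
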